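/- Let U ⊆ ℝ^(n+2) be open, (ξ, N) a null frame on U, and Z : U → ℝ^(n+2) a differentiable closed conformal field with factor φ : U → ℝ. Assume Z*(p) ≠ 0 for every p ∈ U and that Z* is a canonical principal direction: there is λ : U → ℝ with A_{Z⊥}(p)(Z*(p)) = λ(p) • Z*(p) for all p ∈ U. Then η(Z* p, Z* p) > 0 for all p, the unit field T := Z*/√(η(Z*, Z*)) is well defined and differentiable, and for every p ∈ U: (1) P_p(D_{T p} T(p)) = 0, i.e. T is a geodesic vector field for the screen connection; and (2) λ(p) = η(fderiv ℝ Z* p (T p), T p) - φ(p). (Flat-Minkowski-ambient form of the paper's corollary on geodesic canonical principal directions and their eigenvalue.) -/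
import Mathlib

open scoped BigOperators

noncomputable section

/-- Euclidean space `ℝ^m`. -/
abbrev E (m : ℕ) : Type := EuclideanSpace ℝ (Fin m)

/-- The Minkowski bilinear form `η(x,y) = -(x 0)(y 0) + ∑_{i≥1} (x i)(y i)` on `ℝ^(n+2)`. -/
def eta {n : ℕ} (x y : E (n + 2)) : ℝ :=
  (∑ i, x i * y i) - 2 * (x 0 * y 0)

/-- Screen projection `P_p(w) = w - η(w,N)ξ - η(w,ξ)N` determined by the null frame at a point. -/
def sproj {n : ℕ} (xi N w : E (n + 2)) : E (n + 2) :=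
  w - eta w N • xi - eta w xi • N

/-- Screen shape operator `A*_ξ(p)(v) = -P_p(D_v ξ (p))`. -/
def Astar {n : ℕ} (xi N : E (n + 2) → E (n + 2)) (p v : E (n + 2)) : E (n + 2) :=
  -sproj (xi p) (N p) (fderiv ℝ xi p v)

/-- Shape operator `A_N(p)(v) = -P_p(D_v N (p))`. -/
def AN {n : ℕ} (xi N : E (n + 2) → E (n + 2)) (p v : E (n + 2)) : E (n + 2) :=
  -sproj (xi p) (N p) (fderiv ℝ N p v)

/-- Transversal one-form `τ_p(v) = η(D_v N(p), ξ p)`. -/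
def tau {n : ℕ} (xi N : E (n + 2) → E (n + 2)) (p v : E (n + 2)) : ℝ :=
  eta (fderiv ℝ N p v) (xi p)

/-- Screen part `Z*(p) = P_p(Z p)` of a vector field. -/
def Zstar {n : ℕ} (xi N Z : E (n + 2) → E (n + 2)) (p : E (n + 2)) : E (n + 2) :=
  sproj (xi p) (N p) (Z p)

/-- `A_{Z⊥}(p)(v) = η(Z p, N p) • A*_ξ(p)(v) + η(Z p, ξ p) • A_N(p)(v)`. -/
def AZperp {n : ℕ} (xi N Z : E (n + 2) → E (n + 2)) (p v : E (n + 2)) : E (n + 2) :=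
  eta (Z p) (N p) • Astar xi N p v + eta (Z p) (xi p) • AN xi N p v

/-! ### Auxiliary lemmas on `eta` -/

lemma eta_add_left {n : ℕ} (x y z : E (n + 2)) : eta (x + y) z = eta x z + eta y z := by
  simp [eta, add_mul, Finset.sum_add_distrib]; ring

lemma eta_sub_left {n : ℕ} (x y z : E (n + 2)) : eta (x - y) z = eta x z - eta y z := by
  simp [eta, sub_mul, Finset.sum_sub_distrib]; ring

lemma eta_smul_left {n : ℕ} (c : ℝ) (x z : E (n + 2)) : eta (c • x) z = c * eta x z := by
  simp [eta, mul_sub, Finset.mul_sum, mul_assoc]; ring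

lemma eta_comm {n : ℕ} (x y : E (n + 2)) : eta x y = eta y x := by
  simp [eta, mul_comm]

lemma eta_add_right {n : ℕ} (x y z : E (n + 2)) : eta z (x + y) = eta z x + eta z y := by
  rw [eta_comm, eta_add_left, eta_comm x z, eta_comm y z]

lemma eta_sub_right {n : ℕ} (x y z : E (n + 2)) : eta z (x - y) = eta z x - eta z y := by
  rw [eta_comm, eta_sub_left, eta_comm x z, eta_comm y z]

lemma eta_smul_right {n : ℕ} (c : ℝ) (x z : E (n + 2)) : eta z (c • x) = c * eta z x := by
  rw [eta_comm, eta_smul_left, eta_comm]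

lemma eta_neg_left {n : ℕ} (x z : E (n + 2)) : eta (-x) z = - eta x z := by
  simpa using eta_smul_left (-1) x z

/-- The bilinear form `eta` as a continuous bilinear map. -/
def etaB {n : ℕ} : E (n + 2) →L[ℝ] E (n + 2) →L[ℝ] ℝ :=
  (∑ i : Fin (n+2), ContinuousLinearMap.smulRight
      (EuclideanSpace.proj i : E (n+2) →L[ℝ] ℝ) (EuclideanSpace.proj i : E (n+2) →L[ℝ] ℝ)) -
    ContinuousLinearMap.smulRight ((2:ℝ) • (EuclideanSpace.proj (0 : Fin (n+2)) : E (n+2) →L[ℝ] ℝ))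
      (EuclideanSpace.proj (0 : Fin (n+2)) : E (n+2) →L[ℝ] ℝ)

lemma etaB_apply {n : ℕ} (x y : E (n + 2)) : etaB x y = eta x y := by
  simp [etaB, eta, ContinuousLinearMap.smulRight_apply, ContinuousLinearMap.sum_apply]
  ring

lemma differentiableAt_eta {n : ℕ} {f g : E (n+2) → E (n+2)} {p : E (n+2)}
    (hf : DifferentiableAt ℝ f p) (hg : DifferentiableAt ℝ g p) :
    DifferentiableAt ℝ (fun q => eta (f q) (g q)) p := by
  have h : (fun q => eta (f q) (g q)) = fun q => (etaB (f q)) (g q) := by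
    ext q; rw [etaB_apply]
  rw [h]
  exact (etaB.differentiableAt.comp p hf).clm_apply hg

lemma fderiv_eta {n : ℕ} {f g : E (n+2) → E (n+2)} {p : E (n+2)}
    (hf : DifferentiableAt ℝ f p) (hg : DifferentiableAt ℝ g p) (v : E (n+2)) :
    fderiv ℝ (fun q => eta (f q) (g q)) p v
      = eta (fderiv ℝ f p v) (g p) + eta (f p) (fderiv ℝ g p v) := by
  have h : (fun q => eta (f q) (g q)) = fun q => ((⇑etaB ∘ f) q) (g q) := by
    ext q; rw [Function.comp_apply, etaB_apply]
  rw [h, fderiv_clm_apply (etaB.differentiableAt.comp p hf) hg]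
  simp [fderiv_comp p etaB.differentiableAt hf, etaB_apply, add_comm]

/-! ### Auxiliary lemmas on `sproj` -/

lemma sproj_add {n : ℕ} (xi N u v : E (n + 2)) :
    sproj xi N (u + v) = sproj xi N u + sproj xi N v := by
  simp [sproj, eta_add_left, add_smul]; abel

lemma sproj_smul {n : ℕ} (c : ℝ) (xi N u : E (n + 2)) :
    sproj xi N (c • u) = c • sproj xi N u := by
  simp [sproj, eta_smul_left, smul_sub, smul_smul]

lemma sproj_sub {n : ℕ} (xi N u v : E (n + 2)) :
    sproj xi N (u - v) = sproj xi N u - sproj xi N v := by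
  simp [sproj, eta_sub_left, sub_smul]; abel

lemma sproj_neg {n : ℕ} (xi N u : E (n + 2)) :
    sproj xi N (-u) = -sproj xi N u := by
  simpa using sproj_smul (-1) xi N u

lemma eta_sproj_of_screen {n : ℕ} (xi N u w : E (n + 2))
    (h1 : eta xi w = 0) (h2 : eta N w = 0) :
    eta (sproj xi N u) w = eta u w := by
  rw [sproj, eta_sub_left, eta_sub_left, eta_smul_left, eta_smul_left, h1, h2]; ring

lemma sproj_xi {n : ℕ} (xi N : E (n + 2))
    (hxx : eta xi xi = 0) (hxn : eta xi N = 1) : sproj xi N xi = 0 := by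
  rw [sproj, hxx, hxn, one_smul, zero_smul, sub_zero, sub_self]

lemma sproj_N {n : ℕ} (xi N : E (n + 2))
    (hnn : eta N N = 0) (hxn : eta xi N = 1) : sproj xi N N = 0 := by
  rw [sproj, hnn, eta_comm N xi, hxn, one_smul, zero_smul, sub_zero, sub_self]

lemma sproj_idem {n : ℕ} (xi N u : E (n + 2))
    (hxx : eta xi xi = 0) (hnn : eta N N = 0) (hxn : eta xi N = 1) :
    sproj xi N (sproj xi N u) = sproj xi N u := by
  have h1 : eta (sproj xi N u) N = 0 := by
    rw [sproj, eta_sub_left, eta_sub_left, eta_smul_left, eta_smul_left, hxn, hnn]; ring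
  have h2 : eta (sproj xi N u) xi = 0 := by
    rw [sproj, eta_sub_left, eta_sub_left, eta_smul_left, eta_smul_left, hxx,
      eta_comm N xi, hxn]; ring
  rw [sproj, h1, h2, zero_smul, zero_smul, sub_zero, sub_zero]

/-! ### Positivity of `eta` on screen vectors -/

lemma eta_screen_pos {n : ℕ} (xi N v : E (n + 2))
    (hxx : eta xi xi = 0) (hnn : eta N N = 0) (hxn : eta xi N = 1)
    (hvx : eta v xi = 0) (hvn : eta v N = 0) (hv : v ≠ 0) :
    0 < eta v v := by
  set f : E (n+2) := xi - N with hf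
  have hff : eta f f = -2 := by
    rw [hf, eta_sub_left, eta_sub_right, eta_sub_right, eta_comm N xi]
    linarith
  have hvf : eta v f = 0 := by rw [hf, eta_sub_right]; linarith
  set s : Finset (Fin (n+2)) := Finset.univ.erase 0 with hs
  have hsplit : ∀ x y : E (n+2), eta x y = (∑ i ∈ s, x i * y i) - x 0 * y 0 := by
    intro x y
    rw [eta, hs, ← Finset.sum_erase_add Finset.univ _ (Finset.mem_univ 0)]
    ring
  have hSff : (0:ℝ) ≤ ∑ i ∈ s, f i * f i := Finset.sum_nonneg fun i _ => mul_self_nonneg _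
  have hSvv : (0:ℝ) ≤ ∑ i ∈ s, v i * v i := Finset.sum_nonneg fun i _ => mul_self_nonneg _
  have hcs := Finset.sum_mul_sq_le_sq_mul_sq s (fun i => v i) (fun i => f i)
  have h1 : (∑ i ∈ s, f i * f i) - f 0 * f 0 = -2 := by rw [← hsplit]; exact hff
  have h2 : (∑ i ∈ s, v i * f i) = v 0 * f 0 := by
    have := hsplit v f; rw [hvf] at this; linarith
  have hSvv_pos : 0 < ∑ i ∈ s, v i * v i := by
    rcases lt_or_eq_of_le hSvv with h | h
    · exact h
    · exfalso
      have hz : ∀ i ∈ s, v i * v i = 0 := by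
        intro i hi
        have := Finset.sum_eq_zero_iff_of_nonneg (fun i _ => mul_self_nonneg (v i)) |>.mp h.symm
        exact this i hi
      have hv0 : v 0 = 0 := by
        have : v 0 * f 0 = 0 := by
          rw [← h2]; exact Finset.sum_eq_zero fun i hi => by
            have := hz i hi; have hvi : v i = 0 := by nlinarith [mul_self_nonneg (v i)]
            simp [hvi]
        have hf0 : f 0 * f 0 ≥ 2 := by nlinarith
        have hf0' : f 0 ≠ 0 := by intro h0; rw [h0] at hf0; norm_num at hf0
        exact (mul_eq_zero.mp this).resolve_right hf0'
      apply hv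
      ext i
      by_cases hi : i = 0
      · subst hi; simpa using hv0
      · have h3 : v i * v i = 0 := hz i (Finset.mem_erase.mpr ⟨hi, Finset.mem_univ i⟩)
        have : v i = 0 := by nlinarith
        simp [this]
  have e1 : ∑ i ∈ s, (v i)^2 = ∑ i ∈ s, v i * v i := by simp [sq]
  have e2 : ∑ i ∈ s, (f i)^2 = ∑ i ∈ s, f i * f i := by simp [sq]
  rw [e1, e2, h2] at hcs
  rw [hsplit]
  nlinarith [hcs, h1, hSvv_pos, hSff, mul_self_nonneg (f 0), mul_self_nonneg (v 0)]

/-- If the screen part of a closed conformal field is a canonical principal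
direction of `A_{Z⊥}`, then the unit field `T = Z*/|Z*|` is geodesic for the screen connection
and the eigenvalue is `λ = η(∇_T Z*, T) - φ` (flat Minkowski ambient form). -/
theorem canonical_principal_direction_geodesic {n : ℕ}
    (U : Set (E (n + 2))) (hU : IsOpen U)
    (ξ N Z T : E (n + 2) → E (n + 2)) (φ lam : E (n + 2) → ℝ)
    (hξd : ∀ p ∈ U, DifferentiableAt ℝ ξ p)
    (hNd : ∀ p ∈ U, DifferentiableAt ℝ N p)
    (hZd : ∀ p ∈ U, DifferentiableAt ℝ Z p)
    (hξξ : ∀ p ∈ U, eta (ξ p) (ξ p) = 0)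
    (hNN : ∀ p ∈ U, eta (N p) (N p) = 0)
    (hξN : ∀ p ∈ U, eta (ξ p) (N p) = 1)
    (hCC : ∀ p ∈ U, fderiv ℝ Z p = φ p • ContinuousLinearMap.id ℝ (E (n + 2)))
    (hZs0 : ∀ p ∈ U, Zstar ξ N Z p ≠ 0)
    (hpd : ∀ p ∈ U, AZperp ξ N Z p (Zstar ξ N Z p) = lam p • Zstar ξ N Z p)
    (hT : ∀ p, T p = (Real.sqrt (eta (Zstar ξ N Z p) (Zstar ξ N Z p)))⁻¹ • Zstar ξ N Z p) :
    ∀ p ∈ U,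
      0 < eta (Zstar ξ N Z p) (Zstar ξ N Z p) ∧
      DifferentiableAt ℝ T p ∧
      sproj (ξ p) (N p) (fderiv ℝ T p (T p)) = 0 ∧
      lam p = eta (fderiv ℝ (Zstar ξ N Z) p (T p)) (T p) - φ p := by
  intro p hp
  have hξp := hξd p hp
  have hNp := hNd p hp
  have hZp := hZd p hp
  -- notation
  set W : E (n+2) := Zstar ξ N Z p with hWdef0
  have hWdef : W = Z p - eta (Z p) (N p) • ξ p - eta (Z p) (ξ p) • N p := rfl
  set Q : ℝ := eta W W with hQdef
  -- W is a screen vector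
  have hWξ : eta W (ξ p) = 0 := by
    rw [hWdef, eta_sub_left, eta_sub_left, eta_smul_left, eta_smul_left,
      hξξ p hp, eta_comm (N p) (ξ p), hξN p hp]
    ring
  have hWN : eta W (N p) = 0 := by
    rw [hWdef, eta_sub_left, eta_sub_left, eta_smul_left, eta_smul_left,
      hNN p hp, hξN p hp]
    ring
  have hξW : eta (ξ p) W = 0 := by rw [eta_comm]; exact hWξ
  have hNW : eta (N p) W = 0 := by rw [eta_comm]; exact hWN
  have hsW : sproj (ξ p) (N p) W = W :=
    sproj_idem _ _ _ (hξξ p hp) (hNN p hp) (hξN p hp)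
  -- positivity
  have hQ : 0 < Q :=
    eta_screen_pos (ξ p) (N p) W (hξξ p hp) (hNN p hp) (hξN p hp) hWξ hWN (hZs0 p hp)
  -- derivative of Z
  have hZ' : HasFDerivAt Z (φ p • ContinuousLinearMap.id ℝ (E (n + 2))) p := by
    have h := hZp.hasFDerivAt
    rwa [hCC p hp] at h
  -- differentiability of Zstar
  have hZsfun : Zstar ξ N Z = fun q => Z q - eta (Z q) (N q) • ξ q - eta (Z q) (ξ q) • N q := rfl
  have had : DifferentiableAt ℝ (fun q => eta (Z q) (N q)) p := differentiableAt_eta hZp hNp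
  have hbd : DifferentiableAt ℝ (fun q => eta (Z q) (ξ q)) p := differentiableAt_eta hZp hξp
  have hWd : DifferentiableAt ℝ (Zstar ξ N Z) p := by
    rw [hZsfun]
    exact (hZp.sub (had.smul hξp)).sub (hbd.smul hNp)
  -- derivative of Zstar, applied form
  have hW' : HasFDerivAt (Zstar ξ N Z)
      ((φ p • ContinuousLinearMap.id ℝ (E (n + 2))
          - (eta (Z p) (N p) • fderiv ℝ ξ p
              + (fderiv ℝ (fun q => eta (Z q) (N q)) p).smulRight (ξ p)))
        - (eta (Z p) (ξ p) • fderiv ℝ N p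
              + (fderiv ℝ (fun q => eta (Z q) (ξ q)) p).smulRight (N p))) p := by
    rw [hZsfun]
    exact (hZ'.sub (had.hasFDerivAt.smul hξp.hasFDerivAt)).sub
      (hbd.hasFDerivAt.smul hNp.hasFDerivAt)
  have hDWapp : ∀ v, fderiv ℝ (Zstar ξ N Z) p v
      = φ p • v - (fderiv ℝ (fun q => eta (Z q) (N q)) p v) • ξ p
        - eta (Z p) (N p) • fderiv ℝ ξ p v
        - (fderiv ℝ (fun q => eta (Z q) (ξ q)) p v) • N p
        - eta (Z p) (ξ p) • fderiv ℝ N p v := by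
    intro v
    rw [hW'.fderiv]
    simp only [ContinuousLinearMap.coe_sub', Pi.sub_apply, ContinuousLinearMap.add_apply,
      ContinuousLinearMap.coe_smul', Pi.smul_apply, ContinuousLinearMap.coe_id', id_eq,
      ContinuousLinearMap.smulRight_apply]
    abel
  -- consequence of the principal direction hypothesis
  have hpd' : eta (Z p) (N p) • (-(sproj (ξ p) (N p) (fderiv ℝ ξ p W)))
      + eta (Z p) (ξ p) • (-(sproj (ξ p) (N p) (fderiv ℝ N p W))) = lam p • W := hpd p hp
  have hpd2 : eta (Z p) (N p) • sproj (ξ p) (N p) (fderiv ℝ ξ p W)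
      + eta (Z p) (ξ p) • sproj (ξ p) (N p) (fderiv ℝ N p W) = -(lam p • W) := by
    have h := hpd'
    rw [smul_neg, smul_neg, ← neg_add] at h
    rw [← h, neg_neg]
  -- eta version of the principal direction hypothesis
  have hpd3 : eta (Z p) (N p) * eta (fderiv ℝ ξ p W) W
      + eta (Z p) (ξ p) * eta (fderiv ℝ N p W) W = -(lam p * Q) := by
    have h := congrArg (fun u => eta u W) hpd2
    simpa [eta_add_left, eta_smul_left, eta_neg_left,
      eta_sproj_of_screen _ _ _ _ hξW hNW, hQdef] using h
  -- key scalar identity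
  have E1 : eta (fderiv ℝ (Zstar ξ N Z) p W) W = (φ p + lam p) * Q := by
    rw [hDWapp W]
    simp only [eta_sub_left, eta_smul_left, hξW, hNW, mul_zero, sub_zero]
    rw [← hQdef]
    linarith [hpd3]
  -- key vector identity
  have E2 : sproj (ξ p) (N p) (fderiv ℝ (Zstar ξ N Z) p W) = (φ p + lam p) • W := by
    rw [hDWapp W]
    simp only [sproj_sub, sproj_smul, sproj_xi _ _ (hξξ p hp) (hξN p hp),
      sproj_N _ _ (hNN p hp) (hξN p hp), hsW, smul_zero, sub_zero]
    have hrw : eta (Z p) (N p) • sproj (ξ p) (N p) (fderiv ℝ ξ p W)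
        = -(lam p • W) - eta (Z p) (ξ p) • sproj (ξ p) (N p) (fderiv ℝ N p W) := by
      rw [← hpd2]; abel
    rw [hrw, add_smul]
    abel
  -- derivative of Q-function
  have hqd : DifferentiableAt ℝ (fun x => eta (Zstar ξ N Z x) (Zstar ξ N Z x)) p :=
    differentiableAt_eta hWd hWd
  have hDq : ∀ v, fderiv ℝ (fun x => eta (Zstar ξ N Z x) (Zstar ξ N Z x)) p v
      = 2 * eta (fderiv ℝ (Zstar ξ N Z) p v) W := by
    intro v
    rw [fderiv_eta hWd hWd, eta_comm (Zstar ξ N Z p)]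
    rw [← hWdef0]; ring
  have hq' : HasFDerivAt (fun x => eta (Zstar ξ N Z x) (Zstar ξ N Z x))
      (fderiv ℝ (fun x => eta (Zstar ξ N Z x) (Zstar ξ N Z x)) p) p := hqd.hasFDerivAt
  -- square root facts
  have hsq : Real.sqrt Q * Real.sqrt Q = Q := Real.mul_self_sqrt hQ.le
  have hs0 : Real.sqrt Q ≠ 0 := by positivity
  have hQ0 : Q ≠ 0 := hQ.ne'
  -- derivative of sqrt (Q-function)
  have hsq' : HasFDerivAt (fun x => Real.sqrt (eta (Zstar ξ N Z x) (Zstar ξ N Z x)))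
      ((1 / (2 * Real.sqrt Q)) • fderiv ℝ (fun x => eta (Zstar ξ N Z x) (Zstar ξ N Z x)) p) p := by
    have h := hq'.sqrt (by rw [← hWdef0, ← hQdef]; exact hQ0)
    rwa [← hWdef0, ← hQdef] at h
  -- derivative of r = (sqrt ∘ qfun)⁻¹
  have hr' : HasFDerivAt (fun x => (Real.sqrt (eta (Zstar ξ N Z x) (Zstar ξ N Z x)))⁻¹)
      ((-(Real.sqrt Q ^ 2)⁻¹) • ((1 / (2 * Real.sqrt Q))
          • fderiv ℝ (fun x => eta (Zstar ξ N Z x) (Zstar ξ N Z x)) p)) p := by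
    have h := (hasDerivAt_inv (x := Real.sqrt Q) hs0).comp_hasFDerivAt p hsq'
    · exact h
  -- T as a function
  have hTfun : T = fun x => (Real.sqrt (eta (Zstar ξ N Z x) (Zstar ξ N Z x)))⁻¹ • Zstar ξ N Z x :=
    funext hT
  have hrd : DifferentiableAt ℝ
      (fun x => (Real.sqrt (eta (Zstar ξ N Z x) (Zstar ξ N Z x)))⁻¹) p := hr'.differentiableAt
  have hTd : DifferentiableAt ℝ T p := by
    rw [hTfun]; exact hrd.smul hWd
  -- derivative of T
  have hT' : HasFDerivAt T
      ((Real.sqrt Q)⁻¹ • fderiv ℝ (Zstar ξ N Z) p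
        + ((-(Real.sqrt Q ^ 2)⁻¹) • ((1 / (2 * Real.sqrt Q))
            • fderiv ℝ (fun x => eta (Zstar ξ N Z x) (Zstar ξ N Z x)) p)).smulRight W) p := by
    rw [hTfun]
    have h := hr'.smul hWd.hasFDerivAt
    rwa [← hWdef0, ← hQdef] at h
  -- value T p
  have hTp : T p = (Real.sqrt Q)⁻¹ • W := by rw [hT p, ← hWdef0, ← hQdef]
  -- compute fderiv T p (T p)
  have hDTapp : fderiv ℝ T p (T p)
      = ((Real.sqrt Q)⁻¹ * (Real.sqrt Q)⁻¹) • fderiv ℝ (Zstar ξ N Z) p W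
        + ((Real.sqrt Q)⁻¹ * ((-(Real.sqrt Q ^ 2)⁻¹) * ((1 / (2 * Real.sqrt Q))
            * (2 * eta (fderiv ℝ (Zstar ξ N Z) p W) W)))) • W := by
    rw [hT'.fderiv]
    simp only [ContinuousLinearMap.add_apply, ContinuousLinearMap.coe_smul', Pi.smul_apply,
      ContinuousLinearMap.smulRight_apply]
    rw [hTp]
    simp only [map_smul]
    rw [hDq W]
    simp only [smul_smul, smul_eq_mul]
    module
  -- part 3: geodesic equation
  have part3 : sproj (ξ p) (N p) (fderiv ℝ T p (T p)) = 0 := by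
    rw [hDTapp, sproj_add, sproj_smul, sproj_smul, E2, hsW, E1, smul_smul, ← add_smul]
    have hc : (Real.sqrt Q)⁻¹ * (Real.sqrt Q)⁻¹ * (φ p + lam p)
        + (Real.sqrt Q)⁻¹ * (-(Real.sqrt Q ^ 2)⁻¹ * (1 / (2 * Real.sqrt Q)
            * (2 * ((φ p + lam p) * Q)))) = 0 := by
      have key : ∀ s : ℝ, s ≠ 0 → s * s = Q →
          s⁻¹ * s⁻¹ * (φ p + lam p)
            + s⁻¹ * (-(s ^ 2)⁻¹ * (1 / (2 * s) * (2 * ((φ p + lam p) * Q)))) = 0 := by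
        intro s hs hsQ
        rw [← hsQ]
        field_simp
        ring
      exact key _ hs0 hsq
    rw [hc, zero_smul]
  -- part 4: the eigenvalue
  have part4 : lam p = eta (fderiv ℝ (Zstar ξ N Z) p (T p)) (T p) - φ p := by
    rw [hTp, ContinuousLinearMap.map_smul]
    rw [eta_smul_left, eta_smul_right, E1]
    have : (Real.sqrt Q)⁻¹ * ((Real.sqrt Q)⁻¹ * ((φ p + lam p) * Q)) = φ p + lam p := by
      have key : ∀ s : ℝ, s ≠ 0 → s * s = Q →
          s⁻¹ * (s⁻¹ * ((φ p + lam p) * Q)) = φ p + lam p := by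
        intro s hs hsQ
        rw [← hsQ]
        field_simp
      exact key _ hs0 hsq
    rw [this]; ring
  exact ⟨hQ, hTd, part3, part4⟩

end
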